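/- Let n ≥ 2, let r : ZMod n → [0,∞) satisfy L := 1 − 2∑_i r_i > 0, let q : ZMod n → (0,1] satisfy ∑_i q_i = 1, and let P_1, …, P_n be Borel probability measures on [0,∞) such that for every pair of distinct indices i ≠ j, the product measure P_i × P_j gives positive mass to {(a,b) : a > b}. Define the random sequential updating gap kernel κ on X_L by κ(Δ) := ∑_j q_j · (pushforward of P_j under v ↦ F_{v,j}(Δ)), where F_{v,j} changes only the coordinates j−1 and j of Δ by F_{v,j}(Δ)_{j−1} = Δ_{j−1} + min{v, Δ_j} and F_{v,j}(Δ)_j = Δ_j − min{v, Δ_j}. Then κ has exactly one invariant probability measure. -/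

import Mathlib

open MeasureTheory

/-- The sequential update of the gap process at index `j` with jump length `v`:
only coordinates `j - 1` and `j` change. -/
noncomputable def seqGapUpdate (n : ℕ) (j : ZMod n) (v : ℝ) (Δ : ZMod n → ℝ) :
    ZMod n → ℝ :=
  fun k =>
    if k = j - 1 then Δ (j - 1) + min v (Δ j)
    else if k = j then Δ j - min v (Δ j)
    else Δ k

open ENNReal

section Basic
variable {n : ℕ}

lemma sub_one_ne_self (hn : 2 ≤ n) (j : ZMod n) : j - 1 ≠ j := by
  haveI : Fact (1 < n) := ⟨hn⟩
  intro h
  exact one_ne_zero (sub_eq_self.mp h)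

lemma seqGapUpdate_apply_sub_one (j : ZMod n) (v : ℝ) (Δ : ZMod n → ℝ) :
    seqGapUpdate n j v Δ (j - 1) = Δ (j - 1) + min v (Δ j) := by
  simp [seqGapUpdate]

lemma seqGapUpdate_apply_self (hn : 2 ≤ n) (j : ZMod n) (v : ℝ) (Δ : ZMod n → ℝ) :
    seqGapUpdate n j v Δ j = Δ j - min v (Δ j) := by
  simp [seqGapUpdate, (sub_one_ne_self hn j).symm]

lemma seqGapUpdate_apply_other {j k : ZMod n} (h1 : k ≠ j - 1) (h2 : k ≠ j)
    (v : ℝ) (Δ : ZMod n → ℝ) : seqGapUpdate n j v Δ k = Δ k := by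
  simp [seqGapUpdate, h1, h2]

lemma seqGapUpdate_nonneg {j : ZMod n} {v : ℝ} {Δ : ZMod n → ℝ}
    (hΔ : ∀ i, 0 ≤ Δ i) (hv : 0 ≤ v) : ∀ k, 0 ≤ seqGapUpdate n j v Δ k := by
  intro k
  unfold seqGapUpdate
  split_ifs with h1 h2
  · exact add_nonneg (hΔ _) (le_min hv (hΔ j))
  · exact sub_nonneg.2 (min_le_right _ _)
  · exact hΔ k

lemma seqGapUpdate_sum [NeZero n] (hn : 2 ≤ n) (j : ZMod n) (v : ℝ) (Δ : ZMod n → ℝ) :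
    ∑ k : ZMod n, seqGapUpdate n j v Δ k = ∑ k : ZMod n, Δ k := by
  set m := min v (Δ j) with hm
  have key : ∀ k, seqGapUpdate n j v Δ k
      = Δ k + ((if k = j - 1 then m else 0) + (if k = j then -m else 0)) := by
    intro k
    by_cases h1 : k = j - 1
    · subst h1
      rw [seqGapUpdate_apply_sub_one]
      simp [sub_one_ne_self hn j, hm]
    · by_cases h2 : k = j
      · subst h2
        rw [seqGapUpdate_apply_self hn]
        simp [h1, hm]
        ring
      · rw [seqGapUpdate_apply_other h1 h2]
        simp [h1, h2]
  simp only [key]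
  rw [Finset.sum_add_distrib, Finset.sum_add_distrib]
  simp [Finset.sum_ite_eq']

lemma measurable_seqGapUpdate (j : ZMod n) :
    Measurable fun p : (ZMod n → ℝ) × ℝ => seqGapUpdate n j p.2 p.1 := by
  refine measurable_pi_lambda _ fun k => ?_
  unfold seqGapUpdate
  split_ifs with h1 h2
  · exact ((measurable_pi_apply _).comp measurable_fst).add
      (measurable_snd.min ((measurable_pi_apply _).comp measurable_fst))
  · exact ((measurable_pi_apply _).comp measurable_fst).sub
      (measurable_snd.min ((measurable_pi_apply _).comp measurable_fst))
  · exact (measurable_pi_apply _).comp measurable_fst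

lemma measurable_seqGapUpdate_right (j : ZMod n) (Δ : ZMod n → ℝ) :
    Measurable fun v : ℝ => seqGapUpdate n j v Δ :=
  (measurable_seqGapUpdate j).comp (measurable_const.prodMk measurable_id)

end Basic

section Kernel
variable {n : ℕ} [NeZero n]

/-- The one-step transition of the random sequential updating gap chain,
as a map on measures. -/
noncomputable def gapT (q : ZMod n → ℝ) (P : ZMod n → Measure ℝ)
    (μ : Measure (ZMod n → ℝ)) : Measure (ZMod n → ℝ) :=
  ∑ j : ZMod n, ENNReal.ofReal (q j) •
    ((μ.prod (P j)).map (fun p : (ZMod n → ℝ) × ℝ => seqGapUpdate n j p.2 p.1))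

/-- The kernel evaluated at a set, as a function of the state. -/
noncomputable def hitFn (q : ZMod n → ℝ) (P : ZMod n → Measure ℝ)
    (A : Set (ZMod n → ℝ)) (Δ : ZMod n → ℝ) : ℝ≥0∞ :=
  ∑ j : ZMod n, ENNReal.ofReal (q j) * P j ((fun v => seqGapUpdate n j v Δ) ⁻¹' A)

variable (q : ZMod n → ℝ) (P : ZMod n → Measure ℝ) [∀ j, IsProbabilityMeasure (P j)]

omit [NeZero n] in
lemma measurable_hitFn_term {A : Set (ZMod n → ℝ)} (hA : MeasurableSet A) (j : ZMod n) :
    Measurable fun Δ => P j ((fun v => seqGapUpdate n j v Δ) ⁻¹' A) := by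
  have h := measurable_measure_prodMk_left (ν := P j)
    ((measurable_seqGapUpdate j) hA)
  simpa [Set.preimage_preimage] using h

lemma measurable_hitFn {A : Set (ZMod n → ℝ)} (hA : MeasurableSet A) :
    Measurable (hitFn q P A) :=
  Finset.measurable_sum _ fun j _ =>
    Measurable.const_mul (measurable_hitFn_term P hA j) _

lemma gapT_apply (μ : Measure (ZMod n → ℝ)) [SFinite μ] {A : Set (ZMod n → ℝ)}
    (hA : MeasurableSet A) :
    gapT q P μ A = ∫⁻ Δ, hitFn q P A Δ ∂μ := by
  unfold gapT
  rw [Measure.finset_sum_apply]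
  have key : ∀ j : ZMod n, (ENNReal.ofReal (q j) •
      ((μ.prod (P j)).map (fun p : (ZMod n → ℝ) × ℝ => seqGapUpdate n j p.2 p.1))) A
      = ∫⁻ Δ, ENNReal.ofReal (q j) * P j ((fun v => seqGapUpdate n j v Δ) ⁻¹' A) ∂μ := by
    intro j
    rw [Measure.smul_apply, Measure.map_apply (measurable_seqGapUpdate j) hA,
      Measure.prod_apply ((measurable_seqGapUpdate j) hA), smul_eq_mul,
      ← lintegral_const_mul _ (measurable_measure_prodMk_left (ν := P j)
        ((measurable_seqGapUpdate j) hA))]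
    simp only [Set.preimage_preimage]
  simp only [key]
  rw [← lintegral_finset_sum _
    (fun j _ => Measurable.const_mul (measurable_hitFn_term P hA j) _)]
  rfl

lemma gapT_lintegral (μ : Measure (ZMod n → ℝ)) [SFinite μ] {h : (ZMod n → ℝ) → ℝ≥0∞}
    (hh : Measurable h) :
    ∫⁻ x, h x ∂(gapT q P μ)
      = ∫⁻ Δ, ∑ j : ZMod n, ENNReal.ofReal (q j) *
          ∫⁻ v, h (seqGapUpdate n j v Δ) ∂(P j) ∂μ := by
  have hFm : ∀ j : ZMod n, Measurable fun Δ => ∫⁻ v, h (seqGapUpdate n j v Δ) ∂(P j) :=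
    fun j => Measurable.lintegral_prod_right' (hh.comp (measurable_seqGapUpdate j))
  unfold gapT
  rw [lintegral_finset_sum_measure]
  have key : ∀ j : ZMod n, ∫⁻ x, h x ∂(ENNReal.ofReal (q j) •
      ((μ.prod (P j)).map (fun p : (ZMod n → ℝ) × ℝ => seqGapUpdate n j p.2 p.1)))
      = ENNReal.ofReal (q j) * ∫⁻ Δ, ∫⁻ v, h (seqGapUpdate n j v Δ) ∂(P j) ∂μ := by
    intro j
    rw [lintegral_smul_measure, lintegral_map hh (measurable_seqGapUpdate j),
      lintegral_prod (fun z : (ZMod n → ℝ) × ℝ => h (seqGapUpdate n j z.2 z.1))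
        ((hh.comp (measurable_seqGapUpdate j)).aemeasurable)]
    rfl
  simp only [key]
  rw [lintegral_finset_sum _ (fun j _ => (hFm j).const_mul _)]
  exact Finset.sum_congr rfl fun j _ => (lintegral_const_mul _ (hFm j)).symm

end Kernel

section Props
variable {n : ℕ} [NeZero n]
variable (q : ZMod n → ℝ) (P : ZMod n → Measure ℝ) [∀ j, IsProbabilityMeasure (P j)]

/-- The state space of admissible gap configurations. -/
def Xset (n : ℕ) [NeZero n] (L : ℝ) : Set (ZMod n → ℝ) :=
  {Δ : ZMod n → ℝ | (∀ i, 0 ≤ Δ i) ∧ ∑ i : ZMod n, Δ i = L}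

lemma measurableSet_Xset (L : ℝ) : MeasurableSet (Xset n L) := by
  have h1 : MeasurableSet {Δ : ZMod n → ℝ | ∀ i, 0 ≤ Δ i} := by
    have : {Δ : ZMod n → ℝ | ∀ i, 0 ≤ Δ i} = ⋂ i, (fun Δ : ZMod n → ℝ => Δ i) ⁻¹' Set.Ici 0 := by
      ext Δ; simp [Set.mem_iInter]
    rw [this]
    exact MeasurableSet.iInter fun i => (measurable_pi_apply i) measurableSet_Ici
  have h2 : MeasurableSet {Δ : ZMod n → ℝ | ∑ i : ZMod n, Δ i = L} := by
    have : {Δ : ZMod n → ℝ | ∑ i : ZMod n, Δ i = L}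
        = (fun Δ : ZMod n → ℝ => ∑ i : ZMod n, Δ i) ⁻¹' {L} := rfl
    rw [this]
    exact (Finset.measurable_sum _ fun i _ => measurable_pi_apply i) (measurableSet_singleton L)
  exact h1.inter h2

lemma seqGapUpdate_mem_Xset (hn : 2 ≤ n) {L : ℝ} {Δ : ZMod n → ℝ} (hΔ : Δ ∈ Xset n L)
    {v : ℝ} (hv : 0 ≤ v) (j : ZMod n) : seqGapUpdate n j v Δ ∈ Xset n L :=
  ⟨seqGapUpdate_nonneg hΔ.1 hv, (seqGapUpdate_sum hn j v Δ).trans hΔ.2⟩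

lemma hitFn_univ (Δ : ZMod n → ℝ) :
    hitFn q P Set.univ Δ = ∑ j : ZMod n, ENNReal.ofReal (q j) := by
  unfold hitFn
  simp

lemma gapT_univ_eq (μ : Measure (ZMod n → ℝ)) [SFinite μ] :
    gapT q P μ Set.univ = (∑ j : ZMod n, ENNReal.ofReal (q j)) * μ Set.univ := by
  rw [gapT_apply q P μ MeasurableSet.univ]
  simp only [hitFn_univ]
  rw [lintegral_const]

lemma gapT_univ (hq0 : ∀ i, 0 ≤ q i) (hqsum : ∑ i : ZMod n, q i = 1)
    (μ : Measure (ZMod n → ℝ)) [SFinite μ] :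
    gapT q P μ Set.univ = μ Set.univ := by
  rw [gapT_univ_eq, ← ENNReal.ofReal_sum_of_nonneg fun i _ => hq0 i, hqsum,
    ENNReal.ofReal_one, one_mul]

lemma gapT_isFiniteMeasure (μ : Measure (ZMod n → ℝ)) [IsFiniteMeasure μ] :
    IsFiniteMeasure (gapT q P μ) := by
  constructor
  rw [gapT_univ_eq]
  exact ENNReal.mul_lt_top (ENNReal.sum_lt_top.2 fun j _ => ENNReal.ofReal_lt_top)
    (measure_lt_top μ _)

lemma gapT_null_compl (hn : 2 ≤ n) {L : ℝ} (hP0 : ∀ j, P j (Set.Ici 0) = 1)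
    (μ : Measure (ZMod n → ℝ)) [SFinite μ] (hμ : μ (Xset n L)ᶜ = 0) :
    gapT q P μ (Xset n L)ᶜ = 0 := by
  rw [gapT_apply q P μ (measurableSet_Xset L).compl]
  have hae : hitFn q P (Xset n L)ᶜ =ᵐ[μ] 0 := by
    refine measure_mono_null ?_ hμ
    intro Δ hΔ
    simp only [Set.mem_compl_iff, Set.mem_setOf_eq]
    intro hX
    apply hΔ
    unfold hitFn
    simp only [Pi.zero_apply]
    refine Finset.sum_eq_zero fun j _ => ?_
    have hnull : P j ((fun v => seqGapUpdate n j v Δ) ⁻¹' (Xset n L)ᶜ) = 0 := by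
      refine measure_mono_null (t := (Set.Ici (0:ℝ))ᶜ) (fun v hv => ?_) ?_
      · show v ∈ (Set.Ici (0:ℝ))ᶜ
        intro hv0
        exact hv (seqGapUpdate_mem_Xset hn hX hv0 j)
      · rw [measure_compl measurableSet_Ici (measure_ne_top _ _), hP0 j, measure_univ,
          tsub_self]
    rw [hnull, mul_zero]
  rw [lintegral_congr_ae hae]; simp

lemma gapT_add (μ ν : Measure (ZMod n → ℝ)) [SFinite μ] [SFinite ν] :
    gapT q P (μ + ν) = gapT q P μ + gapT q P ν := by
  ext A hA
  rw [Measure.add_apply, gapT_apply q P _ hA, gapT_apply q P _ hA, gapT_apply q P _ hA,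
    lintegral_add_measure]

lemma gapT_smul (c : ℝ≥0∞) (μ : Measure (ZMod n → ℝ)) [SFinite μ] [SFinite (c • μ)] :
    gapT q P (c • μ) = c • gapT q P μ := by
  ext A hA
  rw [Measure.smul_apply, gapT_apply q P _ hA, gapT_apply q P _ hA, lintegral_smul_measure]

lemma gapT_sum (f : ℕ → Measure (ZMod n → ℝ)) [∀ k, SFinite (f k)] :
    gapT q P (Measure.sum f) = Measure.sum fun k => gapT q P (f k) := by
  ext A hA
  rw [gapT_apply q P _ hA, lintegral_sum_measure, Measure.sum_apply _ hA]
  exact tsum_congr fun k => (gapT_apply q P (f k) hA).symm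

/-- The transition operator acting on functions. -/
noncomputable def gapU (q : ZMod n → ℝ) (P : ZMod n → Measure ℝ)
    (h : (ZMod n → ℝ) → ℝ≥0∞) (Δ : ZMod n → ℝ) : ℝ≥0∞ :=
  ∑ j : ZMod n, ENNReal.ofReal (q j) * ∫⁻ v, h (seqGapUpdate n j v Δ) ∂(P j)

lemma measurable_gapU {h : (ZMod n → ℝ) → ℝ≥0∞} (hh : Measurable h) :
    Measurable (gapU q P h) :=
  Finset.measurable_sum _ fun j _ =>
    (Measurable.lintegral_prod_right' (hh.comp (measurable_seqGapUpdate j))).const_mul _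

lemma measurable_gapU_iterate {h : (ZMod n → ℝ) → ℝ≥0∞} (hh : Measurable h) (k : ℕ) :
    Measurable ((gapU q P)^[k] h) := by
  induction k with
  | zero => exact hh
  | succ k ih => rw [Function.iterate_succ_apply']; exact measurable_gapU q P ih

lemma gapT_iterate_finite (μ : Measure (ZMod n → ℝ)) [IsFiniteMeasure μ] (k : ℕ) :
    IsFiniteMeasure ((gapT q P)^[k] μ) := by
  induction k with
  | zero => simpa using ‹IsFiniteMeasure μ›
  | succ k ih =>
    rw [Function.iterate_succ_apply']
    haveI := ih
    exact gapT_isFiniteMeasure q P _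

lemma gapT_iterate_lintegral (μ : Measure (ZMod n → ℝ)) [IsFiniteMeasure μ] (k : ℕ)
    {h : (ZMod n → ℝ) → ℝ≥0∞} (hh : Measurable h) :
    ∫⁻ x, h x ∂((gapT q P)^[k] μ) = ∫⁻ Δ, (gapU q P)^[k] h Δ ∂μ := by
  induction k generalizing μ with
  | zero => simp
  | succ k ih =>
    rw [Function.iterate_succ_apply]
    haveI : IsFiniteMeasure (gapT q P μ) := gapT_isFiniteMeasure q P μ
    rw [ih (gapT q P μ), gapT_lintegral q P μ (measurable_gapU_iterate q P hh k),
      Function.iterate_succ_apply']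
    rfl

lemma gapT_iterate_apply (μ : Measure (ZMod n → ℝ)) [IsFiniteMeasure μ] (k : ℕ)
    {A : Set (ZMod n → ℝ)} (hA : MeasurableSet A) :
    (gapT q P)^[k] μ A = ∫⁻ Δ, (gapU q P)^[k] (A.indicator 1) Δ ∂μ := by
  haveI := gapT_iterate_finite q P μ k
  rw [← gapT_iterate_lintegral q P μ k (measurable_one.indicator hA)]
  rw [lintegral_indicator hA]
  simp

lemma gapT_iterate_univ (hq0 : ∀ i, 0 ≤ q i) (hqsum : ∑ i : ZMod n, q i = 1)
    (μ : Measure (ZMod n → ℝ)) [IsFiniteMeasure μ] (k : ℕ) :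
    (gapT q P)^[k] μ Set.univ = μ Set.univ := by
  induction k with
  | zero => simp
  | succ k ih =>
    rw [Function.iterate_succ_apply']
    haveI := gapT_iterate_finite q P μ k
    rw [gapT_univ q P hq0 hqsum _, ih]

lemma gapT_iterate_null_compl (hn : 2 ≤ n) {L : ℝ} (hP0 : ∀ j, P j (Set.Ici 0) = 1)
    (μ : Measure (ZMod n → ℝ)) [IsFiniteMeasure μ] (hμ : μ (Xset n L)ᶜ = 0) (k : ℕ) :
    (gapT q P)^[k] μ (Xset n L)ᶜ = 0 := by
  induction k with
  | zero => simpa using hμ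
  | succ k ih =>
    rw [Function.iterate_succ_apply']
    haveI := gapT_iterate_finite q P μ k
    exact gapT_null_compl q P hn hP0 _ ih

end Props

section Words
variable {n : ℕ} [NeZero n]

/-- Apply a finite word of moves (indices and jump lengths), first move first. -/
noncomputable def applyWord (n : ℕ) : List (ZMod n) → List ℝ → (ZMod n → ℝ) → (ZMod n → ℝ)
  | [], _, Δ => Δ
  | j :: w, vs, Δ => applyWord n w vs.tail (seqGapUpdate n j vs.headI Δ)

@[simp] lemma applyWord_nil (vs : List ℝ) (Δ : ZMod n → ℝ) : applyWord n [] vs Δ = Δ := rfl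

lemma applyWord_cons (j : ZMod n) (w : List (ZMod n)) (v : ℝ) (vs : List ℝ) (Δ : ZMod n → ℝ) :
    applyWord n (j :: w) (v :: vs) Δ = applyWord n w vs (seqGapUpdate n j v Δ) := rfl

lemma applyWord_cons' (j : ZMod n) (w : List (ZMod n)) (vs : List ℝ) (Δ : ZMod n → ℝ) :
    applyWord n (j :: w) vs Δ = applyWord n w vs.tail (seqGapUpdate n j vs.headI Δ) := rfl

lemma applyWord_sum (hn : 2 ≤ n) :
    ∀ (w : List (ZMod n)) (vs : List ℝ) (Δ : ZMod n → ℝ),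
      ∑ k : ZMod n, applyWord n w vs Δ k = ∑ k : ZMod n, Δ k := by
  intro w
  induction w with
  | nil => intro vs Δ; simp
  | cons j w ih =>
    intro vs Δ
    rw [applyWord_cons', ih, seqGapUpdate_sum hn]

lemma applyWord_append (w₁ w₂ : List (ZMod n)) :
    ∀ (vs : List ℝ), w₁.length ≤ vs.length → ∀ Δ,
      applyWord n (w₁ ++ w₂) vs Δ
        = applyWord n w₂ (vs.drop w₁.length) (applyWord n w₁ (vs.take w₁.length) Δ) := by
  induction w₁ with
  | nil => intro vs _ Δ; simp
  | cons j w₁ ih =>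
    intro vs hvs Δ
    cases vs with
    | nil => simp at hvs
    | cons v vs =>
      simp only [List.cons_append, List.length_cons, List.drop_succ_cons, List.take_succ_cons]
      rw [applyWord_cons, applyWord_cons, ih vs (by simpa using hvs) (seqGapUpdate n j v Δ)]

lemma cast_ne_cast_of_lt {a b : ℕ} (ha : a < n) (hb : b < n) (h : a ≠ b) :
    (a : ZMod n) ≠ (b : ZMod n) := by
  intro hc
  apply h
  rw [← ZMod.val_cast_of_lt ha, ← ZMod.val_cast_of_lt hb, hc]

lemma applyWord_replicate (hn : 2 ≤ n) (j : ZMod n) {β : ℝ} (hβ : 0 < β) :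
    ∀ (N : ℕ) (Δ : ZMod n → ℝ), (∀ i, 0 ≤ Δ i) → Δ j ≤ N * β →
      ∀ vs : List ℝ, vs.length = N → (∀ v ∈ vs, β ≤ v) →
      applyWord n (List.replicate N j) vs Δ
        = fun k => if k = j - 1 then Δ (j - 1) + Δ j else if k = j then 0 else Δ k := by
  intro N
  induction N with
  | zero =>
    intro Δ hΔ hb vs hlen _
    have hvs : vs = [] := List.length_eq_zero_iff.mp hlen
    subst hvs
    have hj0 : Δ j = 0 := le_antisymm (by simpa using hb) (hΔ j)
    have hne : j ≠ j - 1 := (sub_one_ne_self hn j).symm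
    funext k
    by_cases h1 : k = j - 1
    · simp [List.replicate, h1, hj0]
    · by_cases h2 : k = j
      · simp [List.replicate, h1, h2, hj0, hne]
      · simp [List.replicate, h1, h2]
  | succ N ih =>
    intro Δ hΔ hb vs hlen hvs
    cases vs with
    | nil => simp at hlen
    | cons v vs =>
      have hv : β ≤ v := hvs v (by simp)
      have hstep : applyWord n (List.replicate (N + 1) j) (v :: vs) Δ
          = applyWord n (List.replicate N j) vs (seqGapUpdate n j v Δ) := by
        rw [List.replicate_succ, applyWord_cons]
      set Δ' := seqGapUpdate n j v Δ with hΔ'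
      have hΔ'n : ∀ i, 0 ≤ Δ' i := seqGapUpdate_nonneg hΔ (le_trans hβ.le hv)
      have hΔ'b : Δ' j ≤ N * β := by
        rw [hΔ', seqGapUpdate_apply_self hn]
        rcases le_total v (Δ j) with hc | hc
        · rw [min_eq_left hc]
          push_cast at hb ⊢
          linarith
        · rw [min_eq_right hc]
          simp only [sub_self]
          positivity
      rw [hstep, ih Δ' hΔ'n hΔ'b vs (by simpa using hlen) (fun u hu => hvs u (by simp [hu]))]
      funext k
      by_cases h1 : k = j - 1
      · have : Δ' (j - 1) + Δ' j = Δ (j - 1) + Δ j := by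
          rw [hΔ', seqGapUpdate_apply_sub_one, seqGapUpdate_apply_self hn]
          ring
        simp [h1, this]
      · by_cases h2 : k = j
        · have hne : j ≠ j - 1 := (sub_one_ne_self hn j).symm
          simp [h1, h2, hne]
        · simp [h1, h2, hΔ', seqGapUpdate_apply_other h1 h2]

/-- The sweeping word: zero out gaps `t, t-1, ..., 1` in this order,
using `N` moves for each. -/
def sweepW (n N : ℕ) : ℕ → List (ZMod n)
  | 0 => []
  | t + 1 => List.replicate N ((t + 1 : ℕ) : ZMod n) ++ sweepW n N t

lemma sweepW_length (N : ℕ) : ∀ t, (sweepW n N t).length = t * N := by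
  intro t
  induction t with
  | zero => simp [sweepW]
  | succ t ih => simp [sweepW, ih]; ring

lemma sweep_eq (hn : 2 ≤ n) {β : ℝ} (hβ : 0 < β) (N : ℕ) {L : ℝ} (hNβ : L ≤ N * β) :
    ∀ t : ℕ, t ≤ n - 1 → ∀ Δ : ZMod n → ℝ, (∀ i, 0 ≤ Δ i) → (∑ i : ZMod n, Δ i ≤ L) →
      (∀ s : ℕ, t < s → s ≤ n - 1 → Δ ((s : ℕ) : ZMod n) = 0) →
      ∀ vs : List ℝ, vs.length = (sweepW n N t).length → (∀ v ∈ vs, β ≤ v) →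
      applyWord n (sweepW n N t) vs Δ
        = fun k => if k = 0 then ∑ i : ZMod n, Δ i else 0 := by
  intro t
  induction t with
  | zero =>
    intro _ Δ hΔ _ hzero vs hlen _
    have hvs : vs = [] := List.length_eq_zero_iff.mp (by simpa [sweepW] using hlen)
    subst hvs
    have key : ∀ k : ZMod n, k ≠ 0 → Δ k = 0 := by
      intro k hk
      have hval : ((k.val : ℕ) : ZMod n) = k := ZMod.natCast_rightInverse k
      have h1 : 0 < k.val := by
        rcases Nat.eq_zero_or_pos k.val with h | h
        · exact absurd (by rw [← hval, h, Nat.cast_zero]) hk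
        · exact h
      have h2 : k.val ≤ n - 1 := by have := ZMod.val_lt k; omega
      rw [← hval]
      exact hzero k.val h1 h2
    funext k
    by_cases hk : k = 0
    · subst hk
      simp only [if_pos rfl]
      show Δ 0 = ∑ i : ZMod n, Δ i
      exact (Finset.sum_eq_single 0 (fun b _ hb => key b hb) (by simp)).symm
    · simpa [sweepW, hk] using key k hk
  | succ t ih =>
    intro ht Δ hΔ hsum hzero vs hlen hvs
    have hnn : 1 ≤ n - 1 := by omega
    set j : ZMod n := ((t + 1 : ℕ) : ZMod n) with hj
    have hlen' : vs.length = N + t * N := by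
      rw [hlen, sweepW, List.length_append, List.length_replicate, sweepW_length]
    have hNle : N ≤ vs.length := by omega
    rw [sweepW, applyWord_append _ _ vs (by simpa [List.length_replicate] using hNle)]
    have htake : (vs.take N).length = N := by
      rw [List.length_take]; omega
    have hΔj : Δ j ≤ N * β := by
      calc Δ j ≤ ∑ i : ZMod n, Δ i := Finset.single_le_sum (fun i _ => hΔ i) (Finset.mem_univ j)
      _ ≤ L := hsum
      _ ≤ N * β := hNβ
    rw [List.length_replicate, applyWord_replicate hn j hβ N Δ hΔ hΔj (vs.take N) htake
      (fun u hu => hvs u (List.mem_of_mem_take hu))]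
    set Δ' : ZMod n → ℝ :=
      fun k => if k = j - 1 then Δ (j - 1) + Δ j else if k = j then 0 else Δ k with hΔ'
    have hj1 : j - 1 = ((t : ℕ) : ZMod n) := by
      rw [hj]; push_cast; ring
    have hΔ'n : ∀ i, 0 ≤ Δ' i := by
      intro i
      rw [hΔ']
      dsimp only
      split_ifs
      · exact add_nonneg (hΔ _) (hΔ _)
      · exact le_refl 0
      · exact hΔ i
    have hΔ'sum : ∑ i : ZMod n, Δ' i = ∑ i : ZMod n, Δ i := by
      have := applyWord_replicate hn j hβ N Δ hΔ hΔj (vs.take N) htake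
        (fun u hu => hvs u (List.mem_of_mem_take hu))
      calc ∑ i : ZMod n, Δ' i
          = ∑ i : ZMod n, applyWord n (List.replicate N j) (vs.take N) Δ i := by rw [this]
        _ = ∑ i : ZMod n, Δ i := applyWord_sum hn _ _ _
    have hΔ'zero : ∀ s : ℕ, t < s → s ≤ n - 1 → Δ' ((s : ℕ) : ZMod n) = 0 := by
      intro s hs1 hs2
      rcases eq_or_lt_of_le (Nat.succ_le_of_lt hs1) with h | h
      · -- s = t + 1
        rw [hΔ']
        dsimp only
        rw [← h]
        have hne : j ≠ j - 1 := (sub_one_ne_self hn j).symm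
        rw [if_neg hne, if_pos rfl]
      · -- s > t + 1
        have hsn : s < n := by omega
        have htn : t + 1 < n := by omega
        have httn : t < n := by omega
        have hne1 : ((s : ℕ) : ZMod n) ≠ j :=
          cast_ne_cast_of_lt hsn htn (by omega)
        have hne2 : ((s : ℕ) : ZMod n) ≠ j - 1 := by
          rw [hj1]
          exact cast_ne_cast_of_lt hsn httn (by omega)
        rw [hΔ']
        dsimp only
        rw [if_neg hne2, if_neg hne1]
        exact hzero s (by omega) hs2
    rw [ih (by omega) Δ' hΔ'n (hΔ'sum ▸ hsum) hΔ'zero (vs.drop N)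
      (by rw [List.length_drop]; rw [sweepW_length]; omega)
      (fun u hu => hvs u (List.mem_of_mem_drop hu))]
    rw [hΔ'sum]

end Words

section Doeblin
variable {n : ℕ} [NeZero n]
variable (q : ZMod n → ℝ) (P : ZMod n → Measure ℝ) [∀ j, IsProbabilityMeasure (P j)]

lemma gapU_word_ge {β : ℝ} (c : ℝ≥0∞)
    (hc : ∀ j, c ≤ ENNReal.ofReal (q j) * P j (Set.Ici β)) (Δstar : ZMod n → ℝ) :
    ∀ (w : List (ZMod n)) (Δ : ZMod n → ℝ),
      (∀ vs : List ℝ, vs.length = w.length → (∀ v ∈ vs, β ≤ v) →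
        applyWord n w vs Δ = Δstar) →
      c ^ w.length ≤ (gapU q P)^[w.length] (Set.indicator {Δstar} 1) Δ := by
  intro w
  induction w with
  | nil =>
    intro Δ hw
    have hΔ : Δ = Δstar := by simpa using hw [] rfl (by simp)
    subst hΔ
    simp [Set.indicator_of_mem]
  | cons j w ih =>
    intro Δ hw
    have hmf : Measurable (Set.indicator ({Δstar} : Set (ZMod n → ℝ)) (1 : (ZMod n → ℝ) → ℝ≥0∞)) :=
      measurable_one.indicator (measurableSet_singleton Δstar)
    have hg : Measurable ((gapU q P)^[w.length] (Set.indicator {Δstar} 1)) :=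
      measurable_gapU_iterate q P hmf w.length
    rw [List.length_cons, Function.iterate_succ_apply']
    set g := (gapU q P)^[w.length] (Set.indicator ({Δstar} : Set (ZMod n → ℝ)) 1) with hgdef
    have hpoint : ∀ v ∈ Set.Ici β, c ^ w.length ≤ g (seqGapUpdate n j v Δ) := by
      intro v hv
      refine ih (seqGapUpdate n j v Δ) ?_
      intro vs hlen hβvs
      have h := hw (v :: vs) (by simp [hlen]) ?_
      · rw [applyWord_cons] at h; exact h
      · intro u hu
        rcases List.mem_cons.mp hu with h' | h'
        · exact h' ▸ hv
        · exact hβvs u h'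
    have key : ENNReal.ofReal (q j) * (c ^ w.length * P j (Set.Ici β)) ≤ gapU q P g Δ := by
      have h1 : ∫⁻ _ in Set.Ici β, c ^ w.length ∂(P j)
          ≤ ∫⁻ v in Set.Ici β, g (seqGapUpdate n j v Δ) ∂(P j) :=
        setLIntegral_mono (hg.comp (measurable_seqGapUpdate_right j Δ)) hpoint
      rw [setLIntegral_const] at h1
      have h2 : (∫⁻ v in Set.Ici β, g (seqGapUpdate n j v Δ) ∂(P j))
          ≤ ∫⁻ v, g (seqGapUpdate n j v Δ) ∂(P j) := setLIntegral_le_lintegral _ _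
      have h3 : ENNReal.ofReal (q j) * ∫⁻ v, g (seqGapUpdate n j v Δ) ∂(P j) ≤ gapU q P g Δ := by
        unfold gapU
        exact Finset.single_le_sum
          (f := fun j' : ZMod n => ENNReal.ofReal (q j') * ∫⁻ v, g (seqGapUpdate n j' v Δ) ∂(P j'))
          (fun i _ => zero_le) (Finset.mem_univ j)
      exact le_trans (mul_le_mul_right (le_trans h1 h2) _) h3
    calc c ^ (w.length + 1) = c * c ^ w.length := by rw [pow_succ, mul_comm]
    _ ≤ (ENNReal.ofReal (q j) * P j (Set.Ici β)) * c ^ w.length := mul_le_mul_left (hc j) _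
    _ = ENNReal.ofReal (q j) * (c ^ w.length * P j (Set.Ici β)) := by ring
    _ ≤ gapU q P g Δ := key

omit [NeZero n] [∀ j, IsProbabilityMeasure (P j)] in
lemma exists_pos_Ici (Q : Measure ℝ) (h : 0 < Q (Set.Ioi 0)) :
    ∃ β : ℝ, 0 < β ∧ 0 < Q (Set.Ici β) := by
  by_contra hcon
  push_neg at hcon
  have hz : ∀ k : ℕ, Q (Set.Ici (1 / ((k : ℝ) + 1))) = 0 := by
    intro k
    have h0 : (0 : ℝ) < 1 / ((k : ℝ) + 1) := by positivity
    exact le_antisymm (hcon _ h0) (zero_le)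
  have hU : Set.Ioi (0 : ℝ) ⊆ ⋃ k : ℕ, Set.Ici (1 / ((k : ℝ) + 1)) := by
    intro x hx
    have hx0 : (0 : ℝ) < x := hx
    obtain ⟨k, hk⟩ := exists_nat_gt (1 / x)
    refine Set.mem_iUnion.mpr ⟨k, ?_⟩
    have hk1 : 1 / x < (k : ℝ) + 1 := by linarith
    have : 1 / ((k : ℝ) + 1) < x := by
      rw [div_lt_iff₀ (by positivity)]
      rw [div_lt_iff₀ hx0] at hk1
      linarith
    exact this.le
  have : Q (Set.Ioi 0) ≤ ∑' k : ℕ, Q (Set.Ici (1 / ((k : ℝ) + 1))) :=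
    le_trans (measure_mono hU) (measure_iUnion_le _)
  simp only [hz, tsum_zero] at this
  exact absurd (le_antisymm this (zero_le)) h.ne'

lemma P_Ioi_pos (hn : 2 ≤ n) (hP0 : ∀ j, P j (Set.Ici 0) = 1)
    (hPgt : ∀ i j : ZMod n, i ≠ j → 0 < ((P i).prod (P j)) {p : ℝ × ℝ | p.2 < p.1}) :
    ∀ j, 0 < P j (Set.Ioi 0) := by
  haveI : Fact (1 < n) := ⟨hn⟩
  intro j
  have hij : j ≠ j + 1 := by
    intro h
    exact one_ne_zero (left_eq_add.mp h)
  have hprod := hPgt j (j + 1) hij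
  have hIio : P (j + 1) (Set.Iio 0) = 0 := by
    rw [← Set.compl_Ici, measure_compl measurableSet_Ici (measure_ne_top _ _), hP0,
      measure_univ, tsub_self]
  have hsub : {p : ℝ × ℝ | p.2 < p.1} ⊆
      (Set.Ioi 0 ×ˢ Set.univ) ∪ (Set.univ ×ˢ Set.Iio 0) := by
    intro p hp
    rcases lt_or_ge 0 p.1 with h | h
    · exact Or.inl ⟨h, trivial⟩
    · exact Or.inr ⟨trivial, lt_of_lt_of_le hp h⟩
  have hle := le_trans (measure_mono hsub)
    (measure_union_le (μ := (P j).prod (P (j+1))) _ _)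
  rw [Measure.prod_prod, Measure.prod_prod, hIio, mul_zero, add_zero, measure_univ,
    mul_one] at hle
  exact lt_of_lt_of_le hprod hle

lemma doeblin_exists (hn : 2 ≤ n) {L : ℝ} (hL : 0 < L)
    (hq : ∀ i, 0 < q i ∧ q i ≤ 1)
    (hP0 : ∀ j, P j (Set.Ici 0) = 1)
    (hPioi : ∀ j, 0 < P j (Set.Ioi 0)) :
    ∃ (m : ℕ) (ε : ℝ≥0∞) (Δstar : ZMod n → ℝ), 0 < m ∧ 0 < ε ∧ ε ≤ 1 ∧
      Δstar ∈ Xset n L ∧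
      ∀ μ : Measure (ZMod n → ℝ), IsFiniteMeasure μ → μ (Xset n L)ᶜ = 0 →
        ε * μ Set.univ ≤ (gapT q P)^[m] μ {Δstar} := by
  have hβex : ∀ j : ZMod n, ∃ β : ℝ, 0 < β ∧ 0 < P j (Set.Ici β) :=
    fun j => exists_pos_Ici (P j) (hPioi j)
  choose βf hβf1 hβf2 using hβex
  have hne : (Finset.univ : Finset (ZMod n)).Nonempty := Finset.univ_nonempty
  set β := Finset.univ.inf' hne βf with hβdef
  have hβpos : 0 < β := (Finset.lt_inf'_iff hne).mpr fun j _ => hβf1 j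
  have hPβ : ∀ j, 0 < P j (Set.Ici β) := fun j =>
    lt_of_lt_of_le (hβf2 j) (measure_mono (Set.Ici_subset_Ici.mpr
      (Finset.inf'_le βf (Finset.mem_univ j))))
  set c := Finset.univ.inf' hne (fun j => ENNReal.ofReal (q j) * P j (Set.Ici β)) with hcdef
  have hcpos : 0 < c := (Finset.lt_inf'_iff hne).mpr fun j _ =>
    ENNReal.mul_pos (ENNReal.ofReal_pos.2 (hq j).1).ne' (hPβ j).ne'
  have hc : ∀ j, c ≤ ENNReal.ofReal (q j) * P j (Set.Ici β) :=
    fun j => Finset.inf'_le _ (Finset.mem_univ j)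
  have hcle1 : c ≤ 1 := by
    refine le_trans (hc 0) ?_
    calc ENNReal.ofReal (q 0) * P 0 (Set.Ici β) ≤ 1 * 1 :=
      mul_le_mul' (ENNReal.ofReal_le_one.2 (hq 0).2) prob_le_one
    _ = 1 := one_mul 1
  set N := max 1 ⌈L / β⌉₊ with hNdef
  have hNβ : L ≤ N * β := by
    have h1 : L / β ≤ ((N : ℕ) : ℝ) :=
      le_trans (Nat.le_ceil _) (Nat.cast_le.2 (le_max_right _ _))
    calc L = L / β * β := by field_simp
    _ ≤ (N : ℝ) * β := mul_le_mul_of_nonneg_right h1 hβpos.le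
  set w := sweepW n N (n - 1) with hwdef
  set m := w.length with hmdef
  have hm : 0 < m := by
    rw [hmdef, hwdef, sweepW_length]
    have h1 : 1 ≤ N := le_max_left _ _
    have h2 : 1 ≤ n - 1 := by omega
    exact Nat.mul_pos (by omega) (by omega)
  set Δstar := fun k : ZMod n => if k = (0 : ZMod n) then L else 0 with hΔstardef
  have hΔstarX : Δstar ∈ Xset n L := by
    constructor
    · intro i
      rw [hΔstardef]
      dsimp only
      split_ifs
      · exact hL.le
      · exact le_refl 0
    · rw [hΔstardef]
      simp [Finset.sum_ite_eq']
  refine ⟨m, c ^ m, Δstar, hm, ENNReal.pow_pos hcpos m, pow_le_one' hcle1 m, hΔstarX, ?_⟩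
  intro μ hfin hμX
  haveI := hfin
  have hXm : MeasurableSet (Xset n L) := measurableSet_Xset L
  have hpoint : ∀ Δ ∈ Xset n L,
      c ^ m ≤ (gapU q P)^[m] (Set.indicator {Δstar} 1) Δ := by
    intro Δ hΔ
    refine gapU_word_ge q P c hc Δstar w Δ ?_
    intro vs hlen hβvs
    have hzero : ∀ s : ℕ, n - 1 < s → s ≤ n - 1 → Δ ((s : ℕ) : ZMod n) = 0 :=
      fun s hs1 hs2 => absurd (lt_of_lt_of_le hs1 hs2) (lt_irrefl _)
    have h := sweep_eq hn hβpos N hNβ (n - 1) le_rfl Δ hΔ.1 (le_of_eq hΔ.2) hzero vs hlen hβvs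
    rw [h, hΔ.2]
  have hμXuniv : μ (Xset n L) = μ Set.univ := by
    have h := measure_add_measure_compl hXm (μ := μ)
    rw [hμX, add_zero] at h
    exact h
  calc c ^ m * μ Set.univ = c ^ m * μ (Xset n L) := by rw [hμXuniv]
  _ = ∫⁻ _ in Xset n L, c ^ m ∂μ := (setLIntegral_const _ _).symm
  _ ≤ ∫⁻ Δ in Xset n L, (gapU q P)^[m] (Set.indicator {Δstar} 1) Δ ∂μ :=
    setLIntegral_mono (measurable_gapU_iterate q P
      (measurable_one.indicator (measurableSet_singleton Δstar)) m) hpoint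
  _ ≤ ∫⁻ Δ, (gapU q P)^[m] (Set.indicator {Δstar} 1) Δ ∂μ := setLIntegral_le_lintegral _ _
  _ = (gapT q P)^[m] μ {Δstar} :=
    (gapT_iterate_apply q P μ m (measurableSet_singleton Δstar)).symm

end Doeblin

section Uniqueness
variable {n : ℕ} [NeZero n]
variable (q : ZMod n → ℝ) (P : ZMod n → Measure ℝ) [∀ j, IsProbabilityMeasure (P j)]

lemma gapT_iterate_add (μ ν : Measure (ZMod n → ℝ)) [IsFiniteMeasure μ] [IsFiniteMeasure ν]
    (k : ℕ) : (gapT q P)^[k] (μ + ν) = (gapT q P)^[k] μ + (gapT q P)^[k] ν := by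
  induction k with
  | zero => simp
  | succ k ih =>
    rw [Function.iterate_succ_apply', Function.iterate_succ_apply',
      Function.iterate_succ_apply', ih]
    haveI := gapT_iterate_finite q P μ k
    haveI := gapT_iterate_finite q P ν k
    exact gapT_add q P _ _

lemma invariant_unique (hn : 2 ≤ n) {L : ℝ}
    (hq0 : ∀ i, 0 ≤ q i) (hqsum : ∑ i : ZMod n, q i = 1)
    (m : ℕ) (ε : ℝ≥0∞) (Δstar : ZMod n → ℝ) (hε : 0 < ε)
    (hdoeb : ∀ μ : Measure (ZMod n → ℝ), IsFiniteMeasure μ → μ (Xset n L)ᶜ = 0 →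
      ε * μ Set.univ ≤ (gapT q P)^[m] μ {Δstar})
    (μ₁ μ₂ : Measure (ZMod n → ℝ))
    [IsProbabilityMeasure μ₁] [IsProbabilityMeasure μ₂]
    (h₁X : μ₁ (Xset n L)ᶜ = 0) (h₂X : μ₂ (Xset n L)ᶜ = 0)
    (h₁ : gapT q P μ₁ = μ₁) (h₂ : gapT q P μ₂ = μ₂) : μ₁ = μ₂ := by
  set ν := μ₁ ⊓ μ₂ with hνdef
  have hν1 : ν ≤ μ₁ := inf_le_left
  have hν2 : ν ≤ μ₂ := inf_le_right
  haveI : IsFiniteMeasure ν := isFiniteMeasure_of_le μ₁ hν1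
  have hc1 : ν Set.univ ≤ 1 := by
    calc ν Set.univ ≤ μ₁ Set.univ := Measure.le_iff'.1 hν1 _
    _ = 1 := measure_univ
  by_cases hc : ν Set.univ = 1
  · have key : ∀ μ : Measure (ZMod n → ℝ), IsProbabilityMeasure μ → ν ≤ μ → ν = μ := by
      intro μ hμ hle
      ext A hA
      have h1 : ν A + ν Aᶜ = 1 := by rw [measure_add_measure_compl hA, hc]
      have h2 : μ A + μ Aᶜ = 1 := by rw [measure_add_measure_compl hA, measure_univ]
      have hA1 : ν A ≤ μ A := Measure.le_iff'.1 hle A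
      have hA2 : ν Aᶜ ≤ μ Aᶜ := Measure.le_iff'.1 hle Aᶜ
      refine le_antisymm hA1 ?_
      have hstep : μ A + ν Aᶜ ≤ ν A + ν Aᶜ := by
        calc μ A + ν Aᶜ ≤ μ A + μ Aᶜ := add_le_add_right hA2 _
        _ = 1 := h2
        _ = ν A + ν Aᶜ := h1.symm
      exact (ENNReal.add_le_add_iff_right (measure_ne_top ν Aᶜ)).1 hstep
    exact (key μ₁ ‹_› hν1).symm.trans (key μ₂ ‹_› hν2)
  · have hclt : ν Set.univ < 1 := lt_of_le_of_ne hc1 hc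
    have hrem : (1 : ℝ≥0∞) - ν Set.univ ≠ 0 := by
      rw [Ne, tsub_eq_zero_iff_le]
      exact not_le.mpr hclt
    set ρ₁ := μ₁ - ν with hρ₁def
    set ρ₂ := μ₂ - ν with hρ₂def
    haveI : IsFiniteMeasure ρ₁ := isFiniteMeasure_of_le μ₁ Measure.sub_le
    haveI : IsFiniteMeasure ρ₂ := isFiniteMeasure_of_le μ₂ Measure.sub_le
    have hνX : ν (Xset n L)ᶜ = 0 :=
      le_antisymm (le_trans (Measure.le_iff'.1 hν1 _) h₁X.le) (zero_le)
    have hρ₁X : ρ₁ (Xset n L)ᶜ = 0 :=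
      le_antisymm (le_trans (Measure.le_iff'.1 Measure.sub_le _) h₁X.le) (zero_le)
    have hρ₂X : ρ₂ (Xset n L)ᶜ = 0 :=
      le_antisymm (le_trans (Measure.le_iff'.1 Measure.sub_le _) h₂X.le) (zero_le)
    have hρ₁univ : ρ₁ Set.univ = 1 - ν Set.univ := by
      rw [hρ₁def, Measure.sub_apply MeasurableSet.univ hν1, measure_univ]
    have hρ₂univ : ρ₂ Set.univ = 1 - ν Set.univ := by
      rw [hρ₂def, Measure.sub_apply MeasurableSet.univ hν2, measure_univ]
    have hsplit₁ : ρ₁ + ν = μ₁ := Measure.sub_add_cancel_of_le hν1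
    have hsplit₂ : ρ₂ + ν = μ₂ := Measure.sub_add_cancel_of_le hν2
    have hinv₁ : (gapT q P)^[m] μ₁ = μ₁ := Function.iterate_fixed h₁ m
    have hinv₂ : (gapT q P)^[m] μ₂ = μ₂ := Function.iterate_fixed h₂ m
    have hdec₁ : μ₁ = (gapT q P)^[m] ρ₁ + (gapT q P)^[m] ν := by
      conv_lhs => rw [← hinv₁, ← hsplit₁]
      exact gapT_iterate_add q P _ _ m
    have hdec₂ : μ₂ = (gapT q P)^[m] ρ₂ + (gapT q P)^[m] ν := by
      conv_lhs => rw [← hinv₂, ← hsplit₂]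
      exact gapT_iterate_add q P _ _ m
    set ξ := (gapT q P)^[m] ν + (ε * (1 - ν Set.univ)) • Measure.dirac Δstar with hξdef
    have hdirac : ∀ (ρ : Measure (ZMod n → ℝ)), IsFiniteMeasure ρ → ρ (Xset n L)ᶜ = 0 →
        ρ Set.univ = 1 - ν Set.univ →
        ∀ A : Set (ZMod n → ℝ), MeasurableSet A →
        (ε * (1 - ν Set.univ)) * Measure.dirac Δstar A ≤ (gapT q P)^[m] ρ A := by
      intro ρ hρfin hρX hρu A hA
      rw [Measure.dirac_apply' _ hA]
      by_cases hmem : Δstar ∈ A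
      · rw [Set.indicator_of_mem hmem, Pi.one_apply, mul_one]
        calc ε * (1 - ν Set.univ) = ε * ρ Set.univ := by rw [hρu]
        _ ≤ (gapT q P)^[m] ρ {Δstar} := hdoeb ρ hρfin hρX
        _ ≤ (gapT q P)^[m] ρ A := measure_mono (Set.singleton_subset_iff.mpr hmem)
      · rw [Set.indicator_of_notMem hmem, mul_zero]
        exact zero_le
    have hξle : ∀ (μ ρ : Measure (ZMod n → ℝ)), IsFiniteMeasure ρ → ρ (Xset n L)ᶜ = 0 →
        ρ Set.univ = 1 - ν Set.univ →
        μ = (gapT q P)^[m] ρ + (gapT q P)^[m] ν → ξ ≤ μ := by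
      intro μ ρ hρfin hρX hρu hμeq
      refine Measure.le_iff.2 fun A hA => ?_
      rw [hμeq, hξdef, Measure.add_apply, Measure.add_apply, Measure.smul_apply,
        smul_eq_mul, add_comm ((gapT q P)^[m] ρ A)]
      exact add_le_add_right (hdirac ρ hρfin hρX hρu A hA) _
    have hξν : ξ ≤ ν :=
      le_inf (hξle μ₁ ρ₁ ‹_› hρ₁X hρ₁univ hdec₁) (hξle μ₂ ρ₂ ‹_› hρ₂X hρ₂univ hdec₂)
    have hξuniv : ξ Set.univ = ν Set.univ + ε * (1 - ν Set.univ) := by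
      rw [hξdef, Measure.add_apply, Measure.smul_apply, smul_eq_mul]
      haveI : IsFiniteMeasure ν := ‹_›
      rw [gapT_iterate_univ q P hq0 hqsum ν m]
      simp
    have : ν Set.univ + ε * (1 - ν Set.univ) ≤ ν Set.univ := by
      rw [← hξuniv]
      exact Measure.le_iff'.1 hξν _
    exact absurd this (not_le.mpr (ENNReal.lt_add_right (measure_ne_top ν _)
      (mul_ne_zero hε.ne' hrem)))

end Uniqueness

section Existence
variable {n : ℕ} [NeZero n]
variable (q : ZMod n → ℝ) (P : ZMod n → Measure ℝ) [∀ j, IsProbabilityMeasure (P j)]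

lemma gapT_zero : gapT q P (0 : Measure (ZMod n → ℝ)) = 0 := by
  ext A hA
  rw [gapT_apply q P _ hA]
  simp

lemma gapT_finset_sum (s : Finset ℕ) (f : ℕ → Measure (ZMod n → ℝ))
    [∀ i, IsFiniteMeasure (f i)] :
    gapT q P (∑ i ∈ s, f i) = ∑ i ∈ s, gapT q P (f i) := by
  classical
  induction s using Finset.induction with
  | empty => simpa using gapT_zero q P
  | insert a s' hnotmem ih =>
    haveI : IsFiniteMeasure (∑ i ∈ s', f i) := by
      constructor
      rw [Measure.finset_sum_apply]
      exact ENNReal.sum_lt_top.2 fun i _ => measure_lt_top _ _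
    rw [Finset.sum_insert hnotmem, gapT_add q P _ _, ih, Finset.sum_insert hnotmem]

lemma gapT_iterate_smul (c : ℝ≥0∞) (hc : c ≠ ⊤) (μ : Measure (ZMod n → ℝ))
    [IsFiniteMeasure μ] (k : ℕ) :
    (gapT q P)^[k] (c • μ) = c • (gapT q P)^[k] μ := by
  induction k with
  | zero => simp
  | succ k ih =>
    rw [Function.iterate_succ_apply', Function.iterate_succ_apply', ih]
    haveI : IsFiniteMeasure ((gapT q P)^[k] μ) := gapT_iterate_finite q P μ k
    haveI : IsFiniteMeasure (c • (gapT q P)^[k] μ) := by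
      constructor
      rw [Measure.smul_apply, smul_eq_mul]
      exact ENNReal.mul_lt_top hc.lt_top (measure_lt_top _ _)
    exact gapT_smul q P c _

lemma gapT_iterate_sum (f : ℕ → Measure (ZMod n → ℝ)) [∀ i, IsFiniteMeasure (f i)] (k : ℕ) :
    (gapT q P)^[k] (Measure.sum f) = Measure.sum fun i => (gapT q P)^[k] (f i) := by
  induction k with
  | zero => simp
  | succ k ih =>
    rw [Function.iterate_succ_apply', ih]
    haveI : ∀ i, IsFiniteMeasure ((gapT q P)^[k] (f i)) := fun i => gapT_iterate_finite q P (f i) k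
    rw [gapT_sum q P _]
    exact congrArg Measure.sum (funext fun i => (Function.iterate_succ_apply' _ _ _).symm)

lemma invariant_exists (hn : 2 ≤ n) {L : ℝ}
    (hq0 : ∀ i, 0 ≤ q i) (hqsum : ∑ i : ZMod n, q i = 1)
    (hP0 : ∀ j, P j (Set.Ici 0) = 1)
    (m : ℕ) (ε : ℝ≥0∞) (Δstar : ZMod n → ℝ) (hm : 0 < m) (hε : 0 < ε) (hεle1 : ε ≤ 1)
    (hΔX : Δstar ∈ Xset n L)
    (hdoeb : ∀ μ : Measure (ZMod n → ℝ), IsFiniteMeasure μ → μ (Xset n L)ᶜ = 0 →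
      ε * μ Set.univ ≤ (gapT q P)^[m] μ {Δstar}) :
    ∃ μ : Measure (ZMod n → ℝ), IsProbabilityMeasure μ ∧ μ (Xset n L)ᶜ = 0 ∧
      gapT q P μ = μ := by
  have hεtop : ε ≠ ⊤ := (lt_of_le_of_lt hεle1 ENNReal.one_lt_top).ne
  set δm := Measure.dirac Δstar with hδmdef
  have hδX : δm (Xset n L)ᶜ = 0 := by
    rw [hδmdef, Measure.dirac_apply' _ (measurableSet_Xset L).compl]
    exact Set.indicator_of_notMem (by simpa using hΔX) _
  set S : Measure (ZMod n → ℝ) → Measure (ZMod n → ℝ) :=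
    fun ξ => (gapT q P)^[m] ξ - (ε * ξ Set.univ) • δm with hSdef
  have hdom : ∀ ξ : Measure (ZMod n → ℝ), IsFiniteMeasure ξ → ξ (Xset n L)ᶜ = 0 →
      (ε * ξ Set.univ) • δm ≤ (gapT q P)^[m] ξ := by
    intro ξ h1 h2
    refine Measure.le_iff.2 fun A hA => ?_
    rw [Measure.smul_apply, smul_eq_mul, hδmdef, Measure.dirac_apply' _ hA]
    by_cases hmem : Δstar ∈ A
    · rw [Set.indicator_of_mem hmem, Pi.one_apply, mul_one]
      exact le_trans (hdoeb ξ h1 h2) (measure_mono (Set.singleton_subset_iff.mpr hmem))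
    · rw [Set.indicator_of_notMem hmem, mul_zero]
      exact zero_le
  have hsmulfin : ∀ u : ℝ≥0∞, u ≠ ⊤ → IsFiniteMeasure ((ε * u) • δm) := by
    intro u hu
    constructor
    rw [Measure.smul_apply, smul_eq_mul]
    exact ENNReal.mul_lt_top (ENNReal.mul_lt_top hεtop.lt_top hu.lt_top) (measure_lt_top _ _)
  have hSfacts : ∀ k : ℕ, IsFiniteMeasure (S^[k] δm) ∧ (S^[k] δm) (Xset n L)ᶜ = 0 ∧
      (S^[k] δm) Set.univ = (1 - ε) ^ k := by
    intro k
    induction k with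
    | zero =>
      refine ⟨by
        rw [Function.iterate_zero_apply]
        exact ⟨by rw [hδmdef]; simp⟩,
        by rw [Function.iterate_zero_apply]; exact hδX, by
        rw [Function.iterate_zero_apply, hδmdef]; simp⟩
    | succ k ih =>
      obtain ⟨ihf, ihX, ihu⟩ := ih
      haveI := ihf
      have hdomk := hdom (S^[k] δm) ihf ihX
      haveI := hsmulfin ((S^[k] δm) Set.univ) (measure_ne_top _ _)
      haveI : IsFiniteMeasure ((gapT q P)^[m] (S^[k] δm)) := gapT_iterate_finite q P _ m
      rw [Function.iterate_succ_apply']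
      refine ⟨isFiniteMeasure_of_le _ (Measure.sub_le), ?_, ?_⟩
      · refine le_antisymm ?_ (zero_le)
        calc S (S^[k] δm) (Xset n L)ᶜ
            ≤ (gapT q P)^[m] (S^[k] δm) (Xset n L)ᶜ := Measure.le_iff'.1 Measure.sub_le _
        _ = 0 := gapT_iterate_null_compl q P hn hP0 _ ihX m
      · show ((gapT q P)^[m] (S^[k] δm) - (ε * (S^[k] δm) Set.univ) • δm) Set.univ = _
        rw [Measure.sub_apply MeasurableSet.univ hdomk,
          gapT_iterate_univ q P hq0 hqsum _ m, ihu, Measure.smul_apply, smul_eq_mul,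
          measure_univ, mul_one]
        rw [pow_succ, ENNReal.mul_sub (fun _ _ => ENNReal.pow_ne_top
          (by exact ((tsub_le_self : (1:ℝ≥0∞) - ε ≤ 1).trans_lt ENNReal.one_lt_top).ne)),
          mul_one, mul_comm ((1 - ε) ^ k) ε]
  haveI hSfin : ∀ k, IsFiniteMeasure (S^[k] δm) := fun k => (hSfacts k).1
  set μ₀ := Measure.sum (fun k => S^[k] δm) with hμ₀def
  have hμ₀univ : μ₀ Set.univ = ε⁻¹ := by
    rw [hμ₀def, Measure.sum_apply _ MeasurableSet.univ]
    calc ∑' k, (S^[k] δm) Set.univ = ∑' k, (1 - ε) ^ k := tsum_congr fun k => (hSfacts k).2.2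
    _ = (1 - (1 - ε))⁻¹ := ENNReal.tsum_geometric _
    _ = ε⁻¹ := by rw [ENNReal.sub_sub_cancel ENNReal.one_ne_top hεle1]
  haveI hμ₀fin : IsFiniteMeasure μ₀ := ⟨by rw [hμ₀univ]; exact ENNReal.inv_lt_top.2 hε⟩
  set μstar := ε • μ₀ with hμstardef
  have hμstaruniv : μstar Set.univ = 1 := by
    rw [hμstardef, Measure.smul_apply, smul_eq_mul, hμ₀univ,
      ENNReal.mul_inv_cancel hε.ne' hεtop]
  haveI hμstarprob : IsProbabilityMeasure μstar := ⟨hμstaruniv⟩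
  haveI hμstarfin : IsFiniteMeasure μstar := ⟨by rw [hμstaruniv]; exact ENNReal.one_lt_top⟩
  have hμstarX : μstar (Xset n L)ᶜ = 0 := by
    rw [hμstardef, Measure.smul_apply, smul_eq_mul, hμ₀def,
      Measure.sum_apply _ (measurableSet_Xset L).compl]
    have : ∀ k : ℕ, (S^[k] δm) (Xset n L)ᶜ = 0 := fun k => (hSfacts k).2.1
    simp [this]
  have hrec : ∀ k, (gapT q P)^[m] (S^[k] δm) = S^[k+1] δm + (ε * (1 - ε) ^ k) • δm := by
    intro k
    haveI := hsmulfin ((S^[k] δm) Set.univ) (measure_ne_top _ _)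
    have h2 : S (S^[k] δm) + (ε * (S^[k] δm) Set.univ) • δm = (gapT q P)^[m] (S^[k] δm) :=
      Measure.sub_add_cancel_of_le (hdom (S^[k] δm) (hSfacts k).1 (hSfacts k).2.1)
    rw [(hSfacts k).2.2] at h2
    rw [Function.iterate_succ_apply']
    exact h2.symm
  have hfix : (gapT q P)^[m] μstar = μstar := by
    rw [hμstardef, gapT_iterate_smul q P ε hεtop μ₀ m, hμ₀def, gapT_iterate_sum q P _ m]
    congr 1
    ext A hA
    rw [Measure.sum_apply _ hA, Measure.sum_apply _ hA]
    calc ∑' k, ((gapT q P)^[m] (S^[k] δm)) A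
        = ∑' k, ((S^[k+1] δm) A + (ε * (1 - ε) ^ k) * δm A) := by
          refine tsum_congr fun k => ?_
          rw [hrec k, Measure.add_apply, Measure.smul_apply, smul_eq_mul]
    _ = (∑' k, (S^[k+1] δm) A) + ∑' k, (ε * (1 - ε) ^ k) * δm A := ENNReal.tsum_add
    _ = (∑' k, (S^[k+1] δm) A) + δm A := by
          rw [ENNReal.tsum_mul_right, ENNReal.tsum_mul_left, ENNReal.tsum_geometric,
            ENNReal.sub_sub_cancel ENNReal.one_ne_top hεle1,
            ENNReal.mul_inv_cancel hε.ne' hεtop, one_mul]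
    _ = ∑' k, (S^[k] δm) A := by
          rw [tsum_eq_zero_add' (f := fun k => (S^[k] δm) A) ENNReal.summable]
          rw [Function.iterate_zero_apply, add_comm]
  set μfix := ((m : ℝ≥0∞))⁻¹ • ∑ i ∈ Finset.range m, (gapT q P)^[i] μstar with hμfixdef
  haveI hiterfin : ∀ i : ℕ, IsFiniteMeasure ((gapT q P)^[i] μstar) :=
    fun i => gapT_iterate_finite q P μstar i
  haveI hsumfin : IsFiniteMeasure (∑ i ∈ Finset.range m, (gapT q P)^[i] μstar) :=
    ⟨by rw [Measure.finset_sum_apply]; exact ENNReal.sum_lt_top.2 fun i _ => measure_lt_top _ _⟩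
  have hshift : ∑ i ∈ Finset.range m, (gapT q P)^[i+1] μstar
      = ∑ i ∈ Finset.range m, (gapT q P)^[i] μstar := by
    set f : ℕ → Measure (ZMod n → ℝ) := fun i => (gapT q P)^[i] μstar with hfdef
    have h0m : f m = f 0 := by
      rw [hfdef]
      simpa using hfix
    ext A hA
    have h1 := Finset.sum_range_succ' f m
    have h2 := Finset.sum_range_succ f m
    have h3 : ∑ i ∈ Finset.range m, f (i + 1) + f 0 = ∑ i ∈ Finset.range m, f i + f 0 := by
      rw [← h1, h2, h0m]
    have h4 := congrArg (fun μ : Measure (ZMod n → ℝ) => μ A) h3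
    simp only [Measure.add_apply] at h4
    have hne : f 0 A ≠ ⊤ := measure_ne_top _ _
    have h5 : (∑ i ∈ Finset.range m, f (i + 1)) A = (∑ i ∈ Finset.range m, f i) A := by
      refine le_antisymm ?_ ?_
      · exact (ENNReal.add_le_add_iff_right hne).1 (le_of_eq h4)
      · exact (ENNReal.add_le_add_iff_right hne).1 (le_of_eq h4.symm)
    exact h5
  have hTμfix : gapT q P μfix = μfix := by
    have hminv : ((m : ℝ≥0∞))⁻¹ ≠ ⊤ := by
      simp [ENNReal.inv_ne_top, Nat.cast_ne_zero, hm.ne']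
    haveI : IsFiniteMeasure (((m : ℝ≥0∞))⁻¹ • ∑ i ∈ Finset.range m, (gapT q P)^[i] μstar) := by
      constructor
      rw [Measure.smul_apply, smul_eq_mul]
      exact ENNReal.mul_lt_top hminv.lt_top (measure_lt_top _ _)
    rw [hμfixdef, gapT_smul q P _ _, gapT_finset_sum q P (Finset.range m) _]
    congr 1
    calc ∑ i ∈ Finset.range m, gapT q P ((gapT q P)^[i] μstar)
        = ∑ i ∈ Finset.range m, (gapT q P)^[i+1] μstar :=
          Finset.sum_congr rfl fun i _ => (Function.iterate_succ_apply' _ _ _).symm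
    _ = ∑ i ∈ Finset.range m, (gapT q P)^[i] μstar := hshift
  have hμfixuniv : μfix Set.univ = 1 := by
    rw [hμfixdef, Measure.smul_apply, smul_eq_mul, Measure.finset_sum_apply]
    have huniv : ∀ i ∈ Finset.range m, ((gapT q P)^[i] μstar) Set.univ = 1 := fun i _ => by
      rw [gapT_iterate_univ q P hq0 hqsum μstar i, hμstaruniv]
    rw [Finset.sum_congr rfl huniv, Finset.sum_const, Finset.card_range, nsmul_eq_mul, mul_one]
    exact ENNReal.inv_mul_cancel (Nat.cast_ne_zero.2 hm.ne') (ENNReal.natCast_ne_top m)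
  have hμfixX : μfix (Xset n L)ᶜ = 0 := by
    rw [hμfixdef, Measure.smul_apply, smul_eq_mul, Measure.finset_sum_apply]
    have hX : ∀ i ∈ Finset.range m, ((gapT q P)^[i] μstar) (Xset n L)ᶜ = 0 := fun i _ =>
      gapT_iterate_null_compl q P hn hP0 μstar hμstarX i
    rw [Finset.sum_congr rfl hX]
    simp
  exact ⟨μfix, ⟨hμfixuniv⟩, hμfixX, hTμfix⟩

end Existence

/-- **Theorem 1 of the paper, random sequential updating case.**  At each time
step a single particle `j` is chosen with probability `q_j` and jumps clockwise
by `min v (Δ_j)` with `v ∼ P_j`.  If the jump distributions `P_i` (supported on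
`[0, ∞)`) satisfy the non-degeneracy condition `(P_i × P_j)({a > b}) > 0` for
all `i ≠ j`, then the random sequential updating gap kernel
`κ(Δ) = ∑_j q_j · (P_j).map (v ↦ F_{v,j} Δ)` on
`X_L = {Δ | ∀ i, 0 ≤ Δ i, ∑ i, Δ i = L}` has exactly one invariant probability
measure. -/
theorem seq_gap_kernel_unique_invariant_measure
    (n : ℕ) [NeZero n] (hn : 2 ≤ n)
    (r : ZMod n → ℝ) (hr : ∀ i, 0 ≤ r i)
    (L : ℝ) (hLdef : L = 1 - 2 * ∑ i : ZMod n, r i) (hL : 0 < L)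
    (q : ZMod n → ℝ) (hq : ∀ i, 0 < q i ∧ q i ≤ 1) (hqsum : ∑ i : ZMod n, q i = 1)
    (P : ZMod n → Measure ℝ) [∀ i, IsProbabilityMeasure (P i)]
    (hPsupp : ∀ i, P i (Set.Ici (0 : ℝ)) = 1)
    (hPgt : ∀ i j : ZMod n, i ≠ j →
      0 < ((P i).prod (P j)) {p : ℝ × ℝ | p.2 < p.1}) :
    ∃! μ : Measure (ZMod n → ℝ),
      IsProbabilityMeasure μ ∧
      μ {Δ | (∀ i, 0 ≤ Δ i) ∧ ∑ i : ZMod n, Δ i = L} = 1 ∧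
      ∀ A : Set (ZMod n → ℝ), MeasurableSet A →
        ∫⁻ Δ, ∑ j : ZMod n, ENNReal.ofReal (q j) *
          P j ((fun v => seqGapUpdate n j v Δ) ⁻¹' A) ∂μ = μ A := by
  have hq0 : ∀ i, 0 ≤ q i := fun i => (hq i).1.le
  have hPioi : ∀ j, 0 < P j (Set.Ioi 0) := P_Ioi_pos P hn hPsupp hPgt
  obtain ⟨m, ε, Δstar, hm, hε, hεle1, hΔX, hdoeb⟩ :=
    doeblin_exists q P hn hL hq hPsupp hPioi
  obtain ⟨μfix, hprob, hXc, hTfix⟩ :=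
    invariant_exists q P hn hq0 hqsum hPsupp m ε Δstar hm hε hεle1 hΔX hdoeb
  have hXmeas : MeasurableSet (Xset n L) := measurableSet_Xset L
  have compl_iff : ∀ μ : Measure (ZMod n → ℝ), IsProbabilityMeasure μ →
      (μ (Xset n L) = 1 ↔ μ (Xset n L)ᶜ = 0) := by
    intro μ hμ
    haveI := hμ
    constructor
    · intro h
      rw [measure_compl hXmeas (measure_ne_top _ _), h, measure_univ, tsub_self]
    · intro h
      have h2 := measure_add_measure_compl (μ := μ) hXmeas
      rw [h, add_zero, measure_univ] at h2
      exact h2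
  have cond_iff : ∀ μ : Measure (ZMod n → ℝ), IsProbabilityMeasure μ →
      ((∀ A : Set (ZMod n → ℝ), MeasurableSet A →
        ∫⁻ Δ, ∑ j : ZMod n, ENNReal.ofReal (q j) *
          P j ((fun v => seqGapUpdate n j v Δ) ⁻¹' A) ∂μ = μ A) ↔ gapT q P μ = μ) := by
    intro μ hμ
    haveI := hμ
    constructor
    · intro h
      ext A hA
      rw [gapT_apply q P μ hA]
      exact h A hA
    · intro h A hA
      exact (gapT_apply q P μ hA).symm.trans (by rw [h])
  refine ⟨μfix, ⟨hprob, (compl_iff μfix hprob).2 hXc, (cond_iff μfix hprob).2 hTfix⟩, ?_⟩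
  rintro μ' ⟨hprob', hX1', hcond'⟩
  haveI := hprob'
  haveI := hprob
  exact invariant_unique q P hn hq0 hqsum m ε Δstar hε hdoeb μ' μfix
    ((compl_iff μ' hprob').1 hX1') hXc ((cond_iff μ' hprob').1 hcond') hTfix
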